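/- arXiv:1512.02666 — 4 statements merged into one kernel-verified Lean document; each statement's English description precedes it below -/
import Mathlib

section
/- (Partial regression / Frisch–Waugh–Lovell) Let y ∈ ℝⁿ, x_j ∈ ℝⁿ, and X_S ∈ ℝ^{n×k}, and suppose the matrix Z = [x_j, X_S] ∈ ℝ^{n×(k+1)} has full column rank. Let M_S = I_n − X_S(X_SᵀX_S)^{−1}X_Sᵀ and x̆_j = M_S x_j. Then the coefficient on x_j in the least-squares regression of y on Z, namely the first entry of (ZᵀZ)^{−1}Zᵀy, equals (x̆_jᵀ x̆_j)^{−1} x̆_jᵀ y. -/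
open Matrix

/-- Gram matrix of a matrix with injective `mulVec` is a unit. -/
lemma gram_isUnit {m p : ℕ} (A : Matrix (Fin m) (Fin p) ℝ)
    (h : Function.Injective A.mulVec) : IsUnit (Aᵀ * A) := by
  rw [← Matrix.mulVec_injective_iff_isUnit]
  have hker : LinearMap.ker (Aᵀ * A).mulVecLin = ⊥ := by
    rw [Matrix.ker_mulVecLin_transpose_mul_self]
    exact LinearMap.ker_eq_bot.mpr (by rwa [Matrix.coe_mulVecLin])
  have := LinearMap.ker_eq_bot.mp hker
  rwa [Matrix.coe_mulVecLin] at this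

/-- **Partial regression (Frisch–Waugh–Lovell).**
Let `Z = [x_j, X_S] ∈ ℝ^{n×(k+1)}` have full column rank, `M_S = I - X_S(X_SᵀX_S)⁻¹X_Sᵀ`
and `x̆_j = M_S x_j`.  Then the coefficient on `x_j` in the least-squares regression of `y`
on `Z` (the first entry of `(ZᵀZ)⁻¹Zᵀy`) equals `(x̆_jᵀx̆_j)⁻¹ x̆_jᵀ y`. -/
theorem stmt_4 {n k : ℕ} (y xj : Fin n → ℝ) (XS : Matrix (Fin n) (Fin k) ℝ)
    (Z : Matrix (Fin n) (Fin (k + 1)) ℝ)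
    (hZ : ∀ i, Z i = Fin.cons (xj i) (XS i))
    (hrank : LinearIndependent ℝ (fun l : Fin (k + 1) => Zᵀ l))
    (MS : Matrix (Fin n) (Fin n) ℝ)
    (hMS : MS = 1 - XS * (XSᵀ * XS)⁻¹ * XSᵀ)
    (xbreve : Fin n → ℝ) (hxb : xbreve = MS.mulVec xj) :
    (Zᵀ * Z)⁻¹.mulVec (Zᵀ.mulVec y) 0 = (xbreve ⬝ᵥ xbreve)⁻¹ * (xbreve ⬝ᵥ y) := by
  classical
  set C : Matrix (Fin k) (Fin k) ℝ := XSᵀ * XS with hC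
  -- column facts
  have hZ0 : ∀ i, Z i 0 = xj i := fun i => by rw [hZ i]; rfl
  have hZs : ∀ i (l : Fin k), Z i l.succ = XS i l := fun i l => by
    rw [hZ i]; exact Fin.cons_succ _ _ _
  -- injectivity of Z.mulVec
  have hZinj : Function.Injective Z.mulVec := Matrix.mulVec_injective_iff.mpr hrank
  -- Z.mulVec in terms of xj and XS
  have hZmul : ∀ u : Fin (k + 1) → ℝ,
      Z.mulVec u = u 0 • xj + XS.mulVec (fun l => u l.succ) := by
    intro u; funext i
    simp only [Matrix.mulVec, dotProduct, Pi.add_apply, Pi.smul_apply, smul_eq_mul]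
    rw [Fin.sum_univ_succ]
    simp [hZ0, hZs, mul_comm]
  -- XS columns linearly independent
  have hXSli : LinearIndependent ℝ (fun l : Fin k => XSᵀ l) := by
    have h1 := hrank.comp Fin.succ (Fin.succ_injective k)
    have : (fun l : Fin k => XSᵀ l) = (fun l : Fin k => Zᵀ l.succ) := by
      funext l; funext i
      simp [Matrix.transpose_apply, hZs]
    rw [this]; exact h1
  have hXSinj : Function.Injective XS.mulVec := Matrix.mulVec_injective_iff.mpr hXSli
  have hCunit : IsUnit C := gram_isUnit XS hXSinj
  have hCdet : IsUnit C.det := (Matrix.isUnit_iff_isUnit_det C).mp hCunit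
  have hGunit : IsUnit (Zᵀ * Z) := gram_isUnit Z hZinj
  have hGdet : IsUnit (Zᵀ * Z).det := (Matrix.isUnit_iff_isUnit_det _).mp hGunit
  -- MS is symmetric
  have hCsymm : Cᵀ = C := by rw [hC, Matrix.transpose_mul, Matrix.transpose_transpose]
  have hMSsymm : MSᵀ = MS := by
    rw [hMS, Matrix.transpose_sub, Matrix.transpose_one, Matrix.transpose_mul,
      Matrix.transpose_mul, Matrix.transpose_transpose, Matrix.transpose_nonsing_inv, hCsymm,
      Matrix.mul_assoc]
  -- XSᵀ * MS = 0
  have hXM : XSᵀ * MS = 0 := by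
    rw [hMS, Matrix.mul_sub, Matrix.mul_one]
    have : XSᵀ * (XS * C⁻¹ * XSᵀ) = (C * C⁻¹) * XSᵀ := by
      rw [hC, Matrix.mul_assoc, Matrix.mul_assoc, Matrix.mul_assoc]
    rw [this, Matrix.mul_nonsing_inv _ hCdet, Matrix.one_mul, sub_self]
  -- MS idempotent
  have hMSidem : MS * MS = MS := by
    nth_rewrite 1 [hMS]
    rw [Matrix.sub_mul, Matrix.one_mul, Matrix.mul_assoc, Matrix.mul_assoc, hXM,
      Matrix.mul_zero, Matrix.mul_zero, sub_zero]
  -- dot product with xbreve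
  have hdot : ∀ v : Fin n → ℝ, xbreve ⬝ᵥ v = xj ⬝ᵥ MS.mulVec v := by
    intro v
    rw [hxb, Matrix.dotProduct_mulVec xj MS v, ← Matrix.vecMul_transpose, hMSsymm,
      dotProduct_comm]
  -- xbreve ⬝ᵥ xbreve = xj ⬝ᵥ xbreve
  have hbb : xbreve ⬝ᵥ xbreve = xj ⬝ᵥ xbreve := by
    rw [hdot, hxb, Matrix.mulVec_mulVec, hMSidem]
  -- xbreve ≠ 0
  have hxbne : xbreve ≠ 0 := by
    intro h0
    have hx : xj = XS.mulVec (C⁻¹.mulVec (XSᵀ.mulVec xj)) := by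
      have := hxb.symm.trans h0
      rw [hMS, Matrix.sub_mulVec, Matrix.one_mulVec, sub_eq_zero] at this
      calc xj = (XS * C⁻¹ * XSᵀ) *ᵥ xj := this
        _ = XS.mulVec (C⁻¹.mulVec (XSᵀ.mulVec xj)) := by
            rw [← Matrix.mulVec_mulVec, ← Matrix.mulVec_mulVec]
    set w := C⁻¹.mulVec (XSᵀ.mulVec xj) with hw
    have hu : Z.mulVec (Fin.cons (-1 : ℝ) w) = 0 := by
      rw [hZmul]
      simp only [Fin.cons_zero, Fin.cons_succ]
      rw [← hx]
      funext i
      simp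
    have := hZinj (hu.trans (Z.mulVec_zero).symm)
    have h1 : (Fin.cons (-1 : ℝ) w : Fin (k+1) → ℝ) 0 = 0 := by rw [this]; rfl
    simp at h1
  have hpos : xbreve ⬝ᵥ xbreve ≠ 0 := fun h => hxbne (dotProduct_self_eq_zero.mp h)
  -- the candidate solution
  set b0 : ℝ := (xbreve ⬝ᵥ xbreve)⁻¹ * (xbreve ⬝ᵥ y) with hb0
  set u : Fin n → ℝ := y - b0 • xj with hu
  set w : Fin k → ℝ := C⁻¹.mulVec (XSᵀ.mulVec u) with hw
  set β : Fin (k + 1) → ℝ := Fin.cons b0 w with hβ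
  -- residual
  have hres : y - Z.mulVec β = MS.mulVec u := by
    rw [hZmul]
    simp only [hβ, Fin.cons_zero, Fin.cons_succ]
    rw [hMS, Matrix.sub_mulVec, Matrix.one_mulVec]
    have : (XS * C⁻¹ * XSᵀ).mulVec u = XS.mulVec w := by
      rw [hw, Matrix.mulVec_mulVec, Matrix.mulVec_mulVec, Matrix.mul_assoc]
    rw [this, hu]
    funext i
    simp [sub_sub]
  -- Zᵀ (y - Zβ) = 0
  have hnormal : Zᵀ.mulVec (y - Z.mulVec β) = 0 := by
    funext l
    rw [hres]
    refine Fin.cases ?_ ?_ l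
    · -- xj ⬝ᵥ MS u = xbreve ⬝ᵥ u = 0
      have hcol : Zᵀ.mulVec (MS.mulVec u) 0 = xj ⬝ᵥ MS.mulVec u := by
        simp only [Matrix.mulVec, dotProduct, Matrix.transpose_apply]
        congr 1; funext i; rw [hZ0]
      rw [hcol, ← hdot]
      have : xbreve ⬝ᵥ u = xbreve ⬝ᵥ y - b0 * (xbreve ⬝ᵥ xj) := by
        rw [hu]; simp [dotProduct_sub, dotProduct_smul]
      rw [this]
      have hbx : xbreve ⬝ᵥ xj = xbreve ⬝ᵥ xbreve := by
        rw [hbb, dotProduct_comm]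
      rw [hbx, hb0]
      field_simp
      simp
    · intro l
      have hcol : Zᵀ.mulVec (MS.mulVec u) l.succ = (XSᵀ.mulVec (MS.mulVec u)) l := by
        simp only [Matrix.mulVec, dotProduct, Matrix.transpose_apply]
        congr 1; funext i; rw [hZs]
      rw [hcol, Matrix.mulVec_mulVec, hXM]
      simp
  -- conclude
  have hsolve : (Zᵀ * Z).mulVec β = Zᵀ.mulVec y := by
    have h2 : Zᵀ.mulVec y - Zᵀ.mulVec (Z.mulVec β) = 0 := by
      rw [← Matrix.mulVec_sub, hnormal]
    rw [← Matrix.mulVec_mulVec]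
    exact (sub_eq_zero.mp h2).symm
  have : (Zᵀ * Z)⁻¹.mulVec (Zᵀ.mulVec y) = β := by
    rw [← hsolve, Matrix.mulVec_mulVec, Matrix.nonsing_inv_mul _ hGdet, Matrix.one_mulVec]
  rw [this, hβ]
  rfl
end

section
/- Let H be a real inner product space, let v₁,…,v_s be orthonormal vectors spanning a subspace V, and let w₁,…,w_m (m ≥ 1) be pairwise orthogonal vectors in H such that each w_j decomposes as w_j = Σ_{k=1}^s γ_{jk} v_k + u_j with u_j ⊥ V, ‖u_j‖ = 1, and ‖w_j‖² ≤ c. Then, writing γ_j = (γ_{j1},…,γ_{js}) ∈ ℝ^s, one has ‖Σ_{j=1}^m γ_j‖₂² ≤ m·c. -/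
/-- **Aggregate projection bound for an orthogonal family.**
Let `v₁,…,v_s` be orthonormal spanning `V`, and `w₁,…,w_m` (`m ≥ 1`) pairwise orthogonal
with `w_j = Σ_k γ_{jk} v_k + u_j`, `u_j ⊥ V`, `‖u_j‖ = 1` and `‖w_j‖² ≤ c`.  Then
`‖Σ_j γ_j‖₂² ≤ m·c`. -/
theorem stmt_8 {H : Type*} [NormedAddCommGroup H] [InnerProductSpace ℝ H]
    {s m : ℕ} (hm : 1 ≤ m) (v : Fin s → H) (hv : Orthonormal ℝ v)
    (w u : Fin m → H) (γ : Fin m → Fin s → ℝ) (c : ℝ)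
    (hw : ∀ j, w j = (∑ k, γ j k • v k) + u j)
    (hu_perp : ∀ j, ∀ z ∈ Submodule.span ℝ (Set.range v), (inner ℝ (u j) z : ℝ) = 0)
    (hu_norm : ∀ j, ‖u j‖ = 1)
    (hw_norm : ∀ j, ‖w j‖ ^ 2 ≤ c)
    (hw_ortho : ∀ j l, j ≠ l → (inner ℝ (w j) (w l) : ℝ) = 0) :
    ∑ k, (∑ j, γ j k) ^ 2 ≤ m * c := by
  set W : H := ∑ j, w j with hW
  have hinner : ∀ k, (inner ℝ (v k) W : ℝ) = ∑ j, γ j k := by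
    intro k
    rw [hW, inner_sum]
    refine Finset.sum_congr rfl fun j _ => ?_
    rw [hw j, inner_add_right, inner_sum]
    have hu : (inner ℝ (v k) (u j) : ℝ) = 0 := by
      rw [real_inner_comm]
      exact hu_perp j _ (Submodule.subset_span ⟨k, rfl⟩)
    rw [hu, add_zero]
    rw [Finset.sum_eq_single k]
    · rw [real_inner_smul_right, real_inner_self_eq_norm_sq, hv.1 k]; ring
    · intro l _ hl
      rw [real_inner_smul_right, hv.2 (Ne.symm hl)]; ring
    · simp
  have bessel : ∑ k, (∑ j, γ j k) ^ 2 ≤ ‖W‖ ^ 2 := by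
    have := hv.sum_inner_products_le (s := Finset.univ) W
    calc ∑ k, (∑ j, γ j k) ^ 2 = ∑ k, ‖(inner ℝ (v k) W : ℝ)‖ ^ 2 := by
          refine Finset.sum_congr rfl fun k _ => ?_
          rw [hinner k, Real.norm_eq_abs, sq_abs]
      _ ≤ ‖W‖ ^ 2 := this
  have hWnorm : ‖W‖ ^ 2 = ∑ j, ‖w j‖ ^ 2 := by
    have : (inner ℝ W W : ℝ) = ∑ j, inner ℝ (w j) (w j) := by
      rw [hW, inner_sum]
      refine Finset.sum_congr rfl fun l _ => ?_
      rw [sum_inner, Finset.sum_eq_single l]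
      · intro j _ hj; exact hw_ortho j l hj
      · simp
    rw [← real_inner_self_eq_norm_sq, this]
    exact Finset.sum_congr rfl fun j _ => real_inner_self_eq_norm_sq _
  calc ∑ k, (∑ j, γ j k) ^ 2 ≤ ‖W‖ ^ 2 := bessel
    _ = ∑ j, ‖w j‖ ^ 2 := hWnorm
    _ ≤ ∑ _j : Fin m, c := Finset.sum_le_sum fun j _ => hw_norm j
    _ = m * c := by simp [mul_comm]
end

section
/- Let B ∈ ℝ^{s×s} be symmetric with all diagonal entries B_{kk} ≤ 1, and let c > 0 be such that B + cI is positive semidefinite. Then there exist matrices E, F ∈ ℝ^{s×s} with B = EᵀF such that every row of E and every row of F has Euclidean norm at most 1 + c + √c. -/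
open Matrix

lemma row_add_bound {s : ℕ} (v : Fin s → ℝ) (a : ℝ) (i : Fin s) :
    Real.sqrt (∑ j, (v j + a * (if i = j then 1 else 0)) ^ 2)
      ≤ Real.sqrt (∑ j, v j ^ 2) + |a| := by
  have h := norm_add_le (E := EuclideanSpace ℝ (Fin s))
    ((WithLp.equiv 2 _).symm v)
    ((WithLp.equiv 2 _).symm fun j => a * (if i = j then 1 else 0))
  simp only [EuclideanSpace.norm_eq] at h
  have hsum : (∑ j, (a * (if i = j then 1 else 0)) ^ 2) = a ^ 2 := by
    simp [mul_pow, ite_pow, Finset.sum_ite_eq, Finset.mem_univ]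
  calc Real.sqrt (∑ j, (v j + a * (if i = j then 1 else 0)) ^ 2)
      ≤ Real.sqrt (∑ j, v j ^ 2) + Real.sqrt (∑ j, (a * (if i = j then 1 else 0)) ^ 2) := by
        convert h using 3 <;>
          simp [sq_abs, WithLp.equiv_symm_apply, Pi.add_apply]
    _ = Real.sqrt (∑ j, v j ^ 2) + |a| := by rw [hsum, Real.sqrt_sq_eq_abs]

/-- **Factorization of an almost-PSD matrix with bounded rows.**
Let `B ∈ ℝ^{s×s}` be symmetric with diagonal entries `≤ 1` and `c > 0` with `B + cI`
positive semidefinite.  Then `B = EᵀF` for matrices `E, F` each of whose rows has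
Euclidean norm at most `1 + c + √c`. -/
theorem stmt_9 {s : ℕ} (B : Matrix (Fin s) (Fin s) ℝ) (hB : B.IsSymm)
    (hdiag : ∀ k, B k k ≤ 1) (c : ℝ) (hc : 0 < c)
    (hpsd : (B + c • (1 : Matrix (Fin s) (Fin s) ℝ)).PosSemidef) :
    ∃ E F : Matrix (Fin s) (Fin s) ℝ, B = Eᵀ * F ∧
      (∀ i, Real.sqrt (∑ j, E i j ^ 2) ≤ 1 + c + Real.sqrt c) ∧
      (∀ i, Real.sqrt (∑ j, F i j ^ 2) ≤ 1 + c + Real.sqrt c) := by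
  set D := open scoped MatrixOrder in CFC.sqrt (B + c • (1 : Matrix (Fin s) (Fin s) ℝ)) with hD
  have hDsym : Dᵀ = D := by
    rw [hD]; open scoped MatrixOrder in exact (CFC.sqrt_nonneg (B + c • (1 : Matrix (Fin s) (Fin s) ℝ))).posSemidef.1
  have hDsq : D * D = B + c • 1 := open scoped MatrixOrder in CFC.sqrt_mul_sqrt_self _ hpsd.nonneg
  have hsc : (0:ℝ) ≤ Real.sqrt c := Real.sqrt_nonneg c
  have hrow : ∀ i, Real.sqrt (∑ j, D i j ^ 2) ≤ 1 + c := by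
    intro i
    have h1 : ∑ j, D i j ^ 2 = (D * D) i i := by
      rw [Matrix.mul_apply]
      refine Finset.sum_congr rfl fun j _ => ?_
      have h := congrFun (congrFun hDsym i) j
      rw [Matrix.transpose_apply] at h
      rw [h]; ring
    have h2 : (D * D) i i ≤ 1 + c := by
      rw [hDsq]
      have := hdiag i
      simp only [Matrix.add_apply, Matrix.smul_apply, Matrix.one_apply_eq, smul_eq_mul, mul_one]
      linarith
    have h3 : Real.sqrt (∑ j, D i j ^ 2) ≤ Real.sqrt (1 + c) := by
      apply Real.sqrt_le_sqrt; rw [h1]; exact h2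
    refine h3.trans ?_
    nlinarith [Real.sq_sqrt (by linarith : (0:ℝ) ≤ 1 + c), Real.sqrt_nonneg (1 + c)]
  refine ⟨D + Real.sqrt c • 1, D - Real.sqrt c • 1, ?_, ?_, ?_⟩
  · have ht : (D + Real.sqrt c • 1 : Matrix (Fin s) (Fin s) ℝ)ᵀ = D + Real.sqrt c • 1 := by
      simp [Matrix.transpose_add, hDsym]
    rw [ht]
    have hcc : Real.sqrt c * Real.sqrt c = c := Real.mul_self_sqrt hc.le
    rw [Matrix.add_mul, Matrix.mul_sub, Matrix.mul_sub, hDsq]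
    simp only [Matrix.smul_mul, Matrix.mul_smul, Matrix.mul_one, Matrix.one_mul, smul_smul, hcc]
    abel
  · intro i
    have := row_add_bound (fun j => D i j) (Real.sqrt c) i
    simp only [Matrix.add_apply, Matrix.smul_apply, Matrix.one_apply, smul_eq_mul]
    calc Real.sqrt (∑ j, (D i j + Real.sqrt c * (if i = j then 1 else 0)) ^ 2)
        ≤ Real.sqrt (∑ j, D i j ^ 2) + |Real.sqrt c| := this
      _ ≤ 1 + c + Real.sqrt c := by rw [abs_of_nonneg hsc]; linarith [hrow i]
  · intro i
    have := row_add_bound (fun j => D i j) (-Real.sqrt c) i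
    simp only [Matrix.sub_apply, Matrix.smul_apply, Matrix.one_apply, smul_eq_mul]
    have heq : ∀ j : Fin s, D i j - Real.sqrt c * (if i = j then 1 else 0)
        = D i j + (-Real.sqrt c) * (if i = j then 1 else 0) := by intro j; ring
    simp_rw [heq]
    calc Real.sqrt (∑ j, (D i j + (-Real.sqrt c) * (if i = j then 1 else 0)) ^ 2)
        ≤ Real.sqrt (∑ j, D i j ^ 2) + |(-Real.sqrt c)| := this
      _ ≤ 1 + c + Real.sqrt c := by rw [abs_neg, abs_of_nonneg hsc]; linarith [hrow i]
end

section
/- Let M ∈ ℝ^{p×p} be positive semidefinite, let T ⊆ {1,…,p} with |T| = k ≥ 1, and let d ∈ ℝ^p be supported on T. Suppose the principal submatrix M_{T,T} has minimum eigenvalue at least 1/c for some c > 0. Let β ∈ ℝ^p with ‖β‖_∞ ≤ A for some A ≥ 0, and suppose dᵀMd + 2βᵀd ≤ D for some D ≥ 0. Then ‖d‖₁ ≤ max{ 4Ack, √(2kDc) }. -/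
open Matrix

/-- **ℓ¹ bound for a vector supported on `T` from a quadratic inequality.**
If `M` is PSD, `d` is supported on `T` with `|T| = k ≥ 1`, the principal submatrix `M_{T,T}`
has minimum eigenvalue `≥ 1/c` (stated via the quadratic form on vectors supported on `T`),
`‖β‖_∞ ≤ A`, and `dᵀMd + 2βᵀd ≤ D`, then `‖d‖₁ ≤ max{4Ack, √(2kDc)}`. -/
theorem stmt_13 {p : ℕ} (M : Matrix (Fin p) (Fin p) ℝ) (hM : M.PosSemidef)
    (T : Finset (Fin p)) (k : ℕ) (hk : T.card = k) (hk1 : 1 ≤ k)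
    (d : Fin p → ℝ) (hd : ∀ j ∉ T, d j = 0)
    (c : ℝ) (hc : 0 < c)
    (heig : ∀ v : Fin p → ℝ, (∀ j ∉ T, v j = 0) →
        (1 / c) * ∑ j, v j ^ 2 ≤ v ⬝ᵥ M.mulVec v)
    (β : Fin p → ℝ) (A : ℝ) (hA : 0 ≤ A) (hβ : ∀ j, |β j| ≤ A)
    (D : ℝ) (hD : 0 ≤ D) (hquad : d ⬝ᵥ M.mulVec d + 2 * (β ⬝ᵥ d) ≤ D) :
    ∑ j, |d j| ≤ max (4 * A * c * k) (Real.sqrt (2 * k * D * c)) := by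
  set S := ∑ j, |d j| with hSdef
  set Q := d ⬝ᵥ M.mulVec d with hQdef
  have hS0 : 0 ≤ S := Finset.sum_nonneg fun j _ => abs_nonneg _
  have hk0 : (0:ℝ) < k := by exact_mod_cast hk1
  -- Q ≥ (1/c) ∑ d²
  have hQ : (1 / c) * ∑ j, d j ^ 2 ≤ Q := heig d hd
  have hsq0 : 0 ≤ ∑ j, d j ^ 2 := Finset.sum_nonneg fun j _ => sq_nonneg _
  have hQ0 : 0 ≤ Q := le_trans (by positivity) hQ
  -- |βᵀd| ≤ A S
  have hβd : |β ⬝ᵥ d| ≤ A * S := by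
    calc |β ⬝ᵥ d| = |∑ j, β j * d j| := rfl
      _ ≤ ∑ j, |β j * d j| := Finset.abs_sum_le_sum_abs _ _
      _ ≤ ∑ j, A * |d j| := Finset.sum_le_sum fun j _ => by
            rw [abs_mul]; exact mul_le_mul_of_nonneg_right (hβ j) (abs_nonneg _)
      _ = A * S := by rw [Finset.mul_sum]
  -- Cauchy–Schwarz: S² ≤ k ∑ d²
  have hCS : S ^ 2 ≤ (k : ℝ) * ∑ j, d j ^ 2 := by
    have hSrestr : S = ∑ j ∈ T, |d j| := by
      rw [hSdef, ← Finset.sum_subset (Finset.subset_univ T)]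
      intro x _ hx; rw [hd x hx, abs_zero]
    have hsqrestr : ∑ j, d j ^ 2 = ∑ j ∈ T, d j ^ 2 := by
      rw [← Finset.sum_subset (Finset.subset_univ T)]
      intro x _ hx; rw [hd x hx]; ring
    rw [hSrestr, hsqrestr]
    have := sq_sum_le_card_mul_sum_sq (s := T) (f := fun j => |d j|)
    simpa [hk, sq_abs] using this
  by_cases hcase : |2 * (β ⬝ᵥ d)| ≤ (1/2) * Q
  · -- then Q ≤ 2D, so S ≤ √(2kDc)
    have hQ2D : Q ≤ 2 * D := by
      have : -( (1/2) * Q) ≤ 2 * (β ⬝ᵥ d) := neg_le_of_abs_le hcase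
      nlinarith
    have hS2 : S ^ 2 ≤ 2 * k * D * c := by
      have h1 : ∑ j, d j ^ 2 ≤ c * Q := by
        rw [div_mul_eq_mul_div, one_mul, div_le_iff₀ hc] at hQ
        linarith [hQ]
      nlinarith [mul_le_mul_of_nonneg_left h1 hk0.le,
        mul_le_mul_of_nonneg_left hQ2D (mul_nonneg hk0.le hc.le)]
    refine le_max_of_le_right ?_
    rw [Real.le_sqrt hS0]
    · exact hS2
    · positivity
  · -- then Q < 4 A S, so S ≤ 4 A c k
    push_neg at hcase
    have hQ4AS : Q < 4 * (A * S) := by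
      have : |2 * (β ⬝ᵥ d)| ≤ 2 * (A * S) := by
        rw [abs_mul, abs_two]; linarith
      nlinarith
    refine le_max_of_le_left ?_
    rcases eq_or_lt_of_le hS0 with h0 | hSpos
    · rw [← h0]; positivity
    · have h1 : S ^ 2 ≤ (k : ℝ) * (c * Q) := by
        have : ∑ j, d j ^ 2 ≤ c * Q := by
          rw [div_mul_eq_mul_div, one_mul, div_le_iff₀ hc] at hQ
          linarith [hQ]
        nlinarith
      have h2 : S ^ 2 < (k : ℝ) * (c * (4 * (A * S))) := by
        nlinarith [mul_lt_mul_of_pos_left hQ4AS (mul_pos hk0 hc)]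
      nlinarith [mul_pos hSpos hSpos]
end
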